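/- arXiv:1608.00961 — 2 statements merged into one kernel-verified Lean document; each statement's English description precedes it below -/
import Mathlib

section
/- Let R be a commutative ring and J an ideal of R such that R is J-adically Hausdorff complete (IsAdicComplete J R). Let m be a natural number and T an m × m matrix with entries in R. Then T is a unit in the ring of m × m matrices over R if and only if its entrywise reduction modulo J, i.e. the matrix T.map (Ideal.Quotient.mk J) with entries in R/J, is a unit in the ring of m × m matrices over R/J. -/
/-- Over a `J`-adically Hausdorff complete commutative ring, a square matrix is
invertible if and only if it is invertible modulo `J`. -/
theorem matrix_isUnit_iff_isUnit_map_quotient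
    (R : Type*) [CommRing R] (J : Ideal R) [IsAdicComplete J R]
    (m : ℕ) (T : Matrix (Fin m) (Fin m) R) :
    IsUnit T ↔ IsUnit (T.map (Ideal.Quotient.mk J)) := by
  rw [Matrix.isUnit_iff_isUnit_det, Matrix.isUnit_iff_isUnit_det]
  have hdet : (T.map (Ideal.Quotient.mk J)).det = Ideal.Quotient.mk J T.det :=
    ((Ideal.Quotient.mk J).map_det T).symm
  rw [hdet]
  constructor
  · exact fun h => h.map _
  · rintro ⟨u, hu⟩
    obtain ⟨b, hb⟩ := Ideal.Quotient.mk_surjective (↑u⁻¹ : R ⧸ J)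
    have hmem : T.det * b - 1 ∈ Ideal.jacobson (⊥ : Ideal R) := by
      apply IsAdicComplete.le_jacobson_bot J
      rw [← Ideal.Quotient.eq_zero_iff_mem]
      simp [hb, ← hu]
    have := Ideal.isUnit_of_sub_one_mem_jacobson_bot _ hmem
    exact isUnit_of_mul_isUnit_left this
end

section
/- Let R be a commutative ring, J an ideal of R, and M an R-module that is J-adically Hausdorff complete (IsAdicComplete J M). Let D and D' be submodules of M that are complementary, i.e. D ⊓ D' = ⊥ and D ⊔ D' = ⊤. Then D is J-adically Hausdorff complete as an R-module (IsAdicComplete J D). -/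
/-- Linear maps send `J^n • ⊤` into `J^n • ⊤`. -/
theorem aux_map_smul_top {R : Type*} [CommRing R] (J : Ideal R)
    {M N : Type*} [AddCommGroup M] [Module R M] [AddCommGroup N] [Module R N]
    (f : M →ₗ[R] N) (n : ℕ) {x : M} (hx : x ∈ (J ^ n • ⊤ : Submodule R M)) :
    f x ∈ (J ^ n • ⊤ : Submodule R N) := by
  have h : f x ∈ Submodule.map f (J ^ n • ⊤ : Submodule R M) :=
    Submodule.mem_map_of_mem hx
  rw [Submodule.map_smul''] at h
  exact Submodule.smul_mono le_rfl le_top h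

/-- A direct summand of a `J`-adically Hausdorff complete module is itself
`J`-adically Hausdorff complete. -/
theorem isAdicComplete_of_isCompl_summand
    (R : Type*) [CommRing R] (J : Ideal R)
    (M : Type*) [AddCommGroup M] [Module R M] [IsAdicComplete J M]
    (D D' : Submodule R M) (h1 : D ⊓ D' = ⊥) (h2 : D ⊔ D' = ⊤) :
    IsAdicComplete J D := by
  have hc : IsCompl D D' := ⟨disjoint_iff.mpr h1, codisjoint_iff.mpr h2⟩
  let π : M →ₗ[R] D := D.linearProjOfIsCompl D' hc
  refine { toIsHausdorff := ?_, toIsPrecomplete := ?_ }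
  · constructor
    intro x hx
    have hx' : (x : M) = 0 := by
      apply IsHausdorff.haus (inferInstance : IsHausdorff J M)
      intro n
      rw [SModEq.zero]
      have := (SModEq.zero).mp (hx n)
      exact aux_map_smul_top J D.subtype n this
    exact Subtype.ext hx'
  · constructor
    intro f hf
    have hf' : ∀ m n, m ≤ n →
        ((f m : M)) ≡ (f n : M) [SMOD (J ^ m • ⊤ : Submodule R M)] := by
      intro m n hmn
      rw [SModEq.sub_mem]
      have := (SModEq.sub_mem).mp (hf hmn)
      exact aux_map_smul_top J D.subtype m this
    obtain ⟨L, hL⟩ := IsPrecomplete.prec (inferInstance : IsPrecomplete J M) (fun {m n} h => hf' m n h)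
    refine ⟨π L, fun n => ?_⟩
    rw [SModEq.sub_mem]
    have h1 : π (f n : M) = f n := Submodule.linearProjOfIsCompl_apply_left hc (f n)
    have h2 : ((f n : M)) - L ∈ (J ^ n • ⊤ : Submodule R M) :=
      (SModEq.sub_mem).mp (hL n)
    have := aux_map_smul_top J π n h2
    rwa [map_sub, h1] at this
end
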